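/- For n ≥ 2, the Cremmer–Gervais boundary element b := Σ_{i<j} Σ_{k=1}^{j-i} (e^{i+k}_i ⊗ e^{j-k+1}_j - e^{j-k+1}_j ⊗ e^{i+k}_i) ∈ End(ℂ^n)⊗End(ℂ^n) satisfies the associative classical Yang–Baxter equation b^{13} b^{12} - b^{12} b^{23} + b^{23} b^{13} = 0. -/

import Mathlib

open Matrix Kronecker BigOperators Finset

noncomputable section


/-- `r ⊗ 1` acting on the first two factors of ℂⁿ⊗ℂⁿ⊗ℂⁿ. -/
def op12 (n : ℕ) (r : Matrix (Fin n × Fin n) (Fin n × Fin n) ℂ) :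
    Matrix (Fin n × Fin n × Fin n) (Fin n × Fin n × Fin n) ℂ := fun p q =>
  r (p.1, p.2.1) (q.1, q.2.1) * (if p.2.2 = q.2.2 then 1 else 0)

/-- `1 ⊗ r` acting on the last two factors of ℂⁿ⊗ℂⁿ⊗ℂⁿ. -/
def op23 (n : ℕ) (r : Matrix (Fin n × Fin n) (Fin n × Fin n) ℂ) :
    Matrix (Fin n × Fin n × Fin n) (Fin n × Fin n × Fin n) ℂ := fun p q =>
  r p.2 q.2 * (if p.1 = q.1 then 1 else 0)

/-- `r` acting on the first and third factors of ℂⁿ⊗ℂⁿ⊗ℂⁿ. -/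
def op13 (n : ℕ) (r : Matrix (Fin n × Fin n) (Fin n × Fin n) ℂ) :
    Matrix (Fin n × Fin n × Fin n) (Fin n × Fin n × Fin n) ℂ := fun p q =>
  r (p.1, p.2.2) (q.1, q.2.2) * (if p.2.1 = q.2.1 then 1 else 0)

/-- The Cremmer–Gervais boundary r-matrix
`b = Σ_{i<j} Σ_{k=1}^{j-i} (e^{i+k}_i ⊗ e^{j-k+1}_j - e^{j-k+1}_j ⊗ e^{i+k}_i)`
as an operator on ℂⁿ⊗ℂⁿ.  Indices of `Fin n` are 0-based, so 1-based `e^{i+k}_i` becomes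
`stdBasisMatrix (i+k) i` with `0 ≤ i < j ≤ n-1`, `1 ≤ k ≤ j-i`. -/
def bCG (n : ℕ) : Matrix (Fin n × Fin n) (Fin n × Fin n) ℂ :=
  ∑ i : Fin n, ∑ j : Fin n, if h : i < j then
    ∑ k ∈ (Finset.Icc 1 (j.1 - i.1)).attach,
      (Matrix.single (⟨i.1 + k.1, by have := Finset.mem_Icc.mp k.2; omega⟩ : Fin n) i (1:ℂ) ⊗ₖ
        Matrix.single (⟨j.1 - k.1 + 1, by have := Finset.mem_Icc.mp k.2; omega⟩ : Fin n) j (1:ℂ)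
      - Matrix.single (⟨j.1 - k.1 + 1, by have := Finset.mem_Icc.mp k.2; omega⟩ : Fin n) j (1:ℂ) ⊗ₖ
        Matrix.single (⟨i.1 + k.1, by have := Finset.mem_Icc.mp k.2; omega⟩ : Fin n) i (1:ℂ))
  else 0

/-- The boundary element `b` satisfies the associative classical Yang–Baxter equation
`b¹³ b¹² - b¹² b²³ + b²³ b¹³ = 0`. -/

lemma icc_sum (A B C D : ℕ) :
    (∑ k ∈ Finset.Icc 1 (D - C),
        (if C + k = A ∧ C = C then (1:ℂ) else 0) * (if D - k + 1 = B ∧ D = D then 1 else 0))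
    = if A + B = C + (D + 1) ∧ C < A ∧ A ≤ D then 1 else 0 := by
  by_cases h : A + B = C + (D + 1) ∧ C < A ∧ A ≤ D
  · rw [if_pos h, Finset.sum_eq_single_of_mem (A - C) (Finset.mem_Icc.mpr (by omega))]
    · rw [if_pos ⟨by omega, rfl⟩, if_pos ⟨by omega, rfl⟩, one_mul]
    · intro k hk hkne
      have := Finset.mem_Icc.mp hk
      rw [if_neg (show ¬(C + k = A ∧ C = C) by omega), zero_mul]
  · rw [if_neg h]
    apply Finset.sum_eq_zero
    intro k hk
    have := Finset.mem_Icc.mp hk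
    by_cases h1 : C + k = A
    · rw [if_neg (show ¬(D - k + 1 = B ∧ D = D) by omega), mul_zero]
    · rw [if_neg (show ¬(C + k = A ∧ C = C) by omega), zero_mul]

lemma icc_sum' (A B C D : ℕ) :
    (∑ k ∈ Finset.Icc 1 (D - C),
        (if D - k + 1 = B ∧ D = D then (1:ℂ) else 0) * (if C + k = A ∧ C = C then 1 else 0))
    = if A + B = C + (D + 1) ∧ C < A ∧ A ≤ D then 1 else 0 := by
  rw [← icc_sum A B C D]
  exact Finset.sum_congr rfl fun k _ => mul_comm _ _

lemma Psum (n : ℕ) (a b c d : Fin n) :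
    (∑ x : Fin n, ∑ x1 : Fin n, if h : x < x1 then
        ∑ k ∈ Finset.Icc 1 (x1.1 - x.1),
          (if (x:ℕ) + k = (a:ℕ) ∧ (x:ℕ) = (c:ℕ) then (1:ℂ) else 0) *
          (if (x1:ℕ) - k + 1 = (b:ℕ) ∧ (x1:ℕ) = (d:ℕ) then 1 else 0)
      else 0)
    = if (a:ℕ) + b = c + ((d:ℕ) + 1) ∧ (c:ℕ) < a ∧ (a:ℕ) ≤ d then 1 else 0 := by
  rw [Finset.sum_eq_single c]
  rotate_left
  · intro i _ hi
    apply Finset.sum_eq_zero; intro j _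
    split
    · apply Finset.sum_eq_zero; intro k _
      rw [if_neg (show ¬((i:ℕ) + k = (a:ℕ) ∧ (i:ℕ) = (c:ℕ)) from
        fun h => hi (Fin.ext h.2)), zero_mul]
    · rfl
  · intro h; exact absurd (Finset.mem_univ c) h
  rw [Finset.sum_eq_single d]
  rotate_left
  · intro j _ hj
    split
    · apply Finset.sum_eq_zero; intro k _
      rw [if_neg (show ¬((j:ℕ) - k + 1 = (b:ℕ) ∧ (j:ℕ) = (d:ℕ)) from
        fun h => hj (Fin.ext h.2)), mul_zero]
    · rfl
  · intro h; exact absurd (Finset.mem_univ d) h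
  split
  · exact icc_sum a b c d
  · rename_i hcd
    rw [if_neg (fun hcon => hcd (Fin.lt_def.mpr (by omega)))]

lemma Nsum (n : ℕ) (a b c d : Fin n) :
    (∑ x : Fin n, ∑ x1 : Fin n, if h : x < x1 then
        ∑ k ∈ Finset.Icc 1 (x1.1 - x.1),
          (if (x1:ℕ) - k + 1 = (a:ℕ) ∧ (x1:ℕ) = (c:ℕ) then (1:ℂ) else 0) *
          (if (x:ℕ) + k = (b:ℕ) ∧ (x:ℕ) = (d:ℕ) then 1 else 0)
      else 0)
    = if (b:ℕ) + a = d + ((c:ℕ) + 1) ∧ (d:ℕ) < b ∧ (b:ℕ) ≤ c then 1 else 0 := by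
  rw [Finset.sum_eq_single d]
  rotate_left
  · intro i _ hi
    apply Finset.sum_eq_zero; intro j _
    split
    · apply Finset.sum_eq_zero; intro k _
      rw [if_neg (show ¬((i:ℕ) + k = (b:ℕ) ∧ (i:ℕ) = (d:ℕ)) from
        fun h => hi (Fin.ext h.2)), mul_zero]
    · rfl
  · intro h; exact absurd (Finset.mem_univ d) h
  rw [Finset.sum_eq_single c]
  rotate_left
  · intro j _ hj
    split
    · apply Finset.sum_eq_zero; intro k _
      rw [if_neg (show ¬((j:ℕ) - k + 1 = (a:ℕ) ∧ (j:ℕ) = (c:ℕ)) from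
        fun h => hj (Fin.ext h.2)), zero_mul]
    · rfl
  · intro h; exact absurd (Finset.mem_univ c) h
  split
  · exact icc_sum' b a d c
  · rename_i hcd
    rw [if_neg (fun hcon => hcd (Fin.lt_def.mpr (by omega)))]

lemma bCG_apply (n : ℕ) (a b c d : Fin n) :
    bCG n (a, b) (c, d) =
      if (a:ℕ) + b = c + ((d:ℕ) + 1) then
        (if (a:ℕ) ≤ d then (1:ℂ) else 0) - (if (a:ℕ) ≤ c then 1 else 0)
      else 0 := by
  unfold bCG
  simp only [Matrix.sum_apply,
    apply_dite (fun M : Matrix (Fin n × Fin n) (Fin n × Fin n) ℂ => M (a,b) (c,d)),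
    Matrix.sub_apply, Matrix.kroneckerMap_apply, Matrix.single, Matrix.of_apply,
    Matrix.zero_apply, Fin.ext_iff, Fin.val_mk]
  have key : ∀ x x1 : Fin n,
      (if h : x < x1 then
        (∑ k ∈ (Finset.Icc 1 (x1.1 - x.1)).attach,
          (if (x:ℕ) + (k:ℕ) = (a:ℕ) ∧ (x:ℕ) = (c:ℕ) then (1:ℂ) else 0) *
            (if (x1:ℕ) - (k:ℕ) + 1 = (b:ℕ) ∧ (x1:ℕ) = (d:ℕ) then 1 else 0)) -
        (∑ k ∈ (Finset.Icc 1 (x1.1 - x.1)).attach,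
          (if (x1:ℕ) - (k:ℕ) + 1 = (a:ℕ) ∧ (x1:ℕ) = (c:ℕ) then (1:ℂ) else 0) *
            (if (x:ℕ) + (k:ℕ) = (b:ℕ) ∧ (x:ℕ) = (d:ℕ) then 1 else 0))
      else 0)
      =
      (if h : x < x1 then
        ∑ k ∈ Finset.Icc 1 (x1.1 - x.1),
          (if (x:ℕ) + k = (a:ℕ) ∧ (x:ℕ) = (c:ℕ) then (1:ℂ) else 0) *
          (if (x1:ℕ) - k + 1 = (b:ℕ) ∧ (x1:ℕ) = (d:ℕ) then 1 else 0)
      else 0)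
      -
      (if h : x < x1 then
        ∑ k ∈ Finset.Icc 1 (x1.1 - x.1),
          (if (x1:ℕ) - k + 1 = (a:ℕ) ∧ (x1:ℕ) = (c:ℕ) then (1:ℂ) else 0) *
          (if (x:ℕ) + k = (b:ℕ) ∧ (x:ℕ) = (d:ℕ) then 1 else 0)
      else 0) := by
    intro x x1
    split
    · rw [Finset.sum_attach (Finset.Icc 1 (x1.1 - x.1)) (fun k =>
          (if (x:ℕ) + k = (a:ℕ) ∧ (x:ℕ) = (c:ℕ) then (1:ℂ) else 0) *
          (if (x1:ℕ) - k + 1 = (b:ℕ) ∧ (x1:ℕ) = (d:ℕ) then 1 else 0)),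
        Finset.sum_attach (Finset.Icc 1 (x1.1 - x.1)) (fun k =>
          (if (x1:ℕ) - k + 1 = (a:ℕ) ∧ (x1:ℕ) = (c:ℕ) then (1:ℂ) else 0) *
          (if (x:ℕ) + k = (b:ℕ) ∧ (x:ℕ) = (d:ℕ) then 1 else 0))]
    · rw [sub_zero]
  simp only [key, Finset.sum_sub_distrib]
  rw [Psum n a b c d, Nsum n a b c d]
  split_ifs <;> first | omega | norm_num


lemma sum_delta (n w v : ℕ) (H : Fin n → ℂ) :
    (∑ m : Fin n, if w = (m:ℕ) + v then H m else 0)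
    = if h : v ≤ w ∧ w - v < n then H ⟨w - v, h.2⟩ else 0 := by
  split
  · rename_i h
    rw [Finset.sum_eq_single_of_mem (⟨w - v, h.2⟩ : Fin n) (Finset.mem_univ _)]
    · rw [if_pos (show w = w - v + v by omega)]
    · intro m _ hm
      rw [if_neg]
      intro hc
      exact hm (Fin.ext (show (m:ℕ) = w - v by omega))
  · rename_i h
    apply Finset.sum_eq_zero
    intro m _
    rw [if_neg]
    have := m.2
    omega

lemma sum_delta' (n w v : ℕ) (H : Fin n → ℂ) :
    (∑ m : Fin n, if w = v + ((m:ℕ) + 1) then H m else 0)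
    = if h : v + 1 ≤ w ∧ w - (v + 1) < n then H ⟨w - (v + 1), h.2⟩ else 0 := by
  split
  · rename_i h
    rw [Finset.sum_eq_single_of_mem (⟨w - (v + 1), h.2⟩ : Fin n) (Finset.mem_univ _)]
    · rw [if_pos (show w = v + (w - (v + 1) + 1) by omega)]
    · intro m _ hm
      rw [if_neg]
      intro hc
      exact hm (Fin.ext (show (m:ℕ) = w - (v + 1) by omega))
  · rename_i h
    apply Finset.sum_eq_zero
    intro m _
    rw [if_neg]
    have := m.2
    omega

set_option maxHeartbeats 4000000 in
lemma core (n A B C X Y Z : ℕ) (hA : A < n) (hB : B < n) (hC : C < n)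
    (hX : X < n) (hY : Y < n) (hZ : Z < n) :
    (if h : Z + 1 ≤ A + C ∧ A + C - (Z + 1) < n then
        ((if A ≤ Z then (1:ℂ) else 0) - (if A ≤ A + C - (Z + 1) then 1 else 0)) *
        (if A + C - (Z + 1) + B = X + (Y + 1) then
            (if A + C - (Z + 1) ≤ Y then (1:ℂ) else 0) - (if A + C - (Z + 1) ≤ X then 1 else 0)
          else 0)
      else 0)
    - (if h : X + 1 ≤ A + B ∧ A + B - (X + 1) < n then
        ((if A ≤ A + B - (X + 1) then (1:ℂ) else 0) - (if A ≤ X then 1 else 0)) *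
        (if A + B - (X + 1) + C = Y + (Z + 1) then
            (if A + B - (X + 1) ≤ Z then (1:ℂ) else 0) - (if A + B - (X + 1) ≤ Y then 1 else 0)
          else 0)
      else 0)
    + (if h : Y + 1 ≤ B + C ∧ B + C - (Y + 1) < n then
        ((if B ≤ B + C - (Y + 1) then (1:ℂ) else 0) - (if B ≤ Y then 1 else 0)) *
        (if A + (B + C - (Y + 1)) = X + (Z + 1) then
            (if A ≤ Z then (1:ℂ) else 0) - (if A ≤ X then 1 else 0)
          else 0)
      else 0) = 0 := by
  have g1 : (if h : Z + 1 ≤ A + C ∧ A + C - (Z + 1) < n then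
        ((if A ≤ Z then (1:ℂ) else 0) - (if A ≤ A + C - (Z + 1) then 1 else 0)) *
        (if A + C - (Z + 1) + B = X + (Y + 1) then
            (if A + C - (Z + 1) ≤ Y then (1:ℂ) else 0) - (if A + C - (Z + 1) ≤ X then 1 else 0)
          else 0)
      else 0)
      = ((if A ≤ Z then (1:ℂ) else 0) - (if A ≤ A + C - (Z + 1) then 1 else 0)) *
        (if A + C - (Z + 1) + B = X + (Y + 1) then
            (if A + C - (Z + 1) ≤ Y then (1:ℂ) else 0) - (if A + C - (Z + 1) ≤ X then 1 else 0)
          else 0) := by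
    split
    · rfl
    · rename_i h
      have hz : (if A + C - (Z + 1) + B = X + (Y + 1) then
            (if A + C - (Z + 1) ≤ Y then (1:ℂ) else 0) - (if A + C - (Z + 1) ≤ X then 1 else 0)
          else 0) = 0 := by
        split
        · split_ifs <;> first | omega | norm_num
        · rfl
      rw [hz, mul_zero]
  have g2 : (if h : X + 1 ≤ A + B ∧ A + B - (X + 1) < n then
        ((if A ≤ A + B - (X + 1) then (1:ℂ) else 0) - (if A ≤ X then 1 else 0)) *
        (if A + B - (X + 1) + C = Y + (Z + 1) then
            (if A + B - (X + 1) ≤ Z then (1:ℂ) else 0) - (if A + B - (X + 1) ≤ Y then 1 else 0)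
          else 0)
      else 0)
      = ((if A ≤ A + B - (X + 1) then (1:ℂ) else 0) - (if A ≤ X then 1 else 0)) *
        (if A + B - (X + 1) + C = Y + (Z + 1) then
            (if A + B - (X + 1) ≤ Z then (1:ℂ) else 0) - (if A + B - (X + 1) ≤ Y then 1 else 0)
          else 0) := by
    split
    · rfl
    · rename_i h
      have hz : (if A + B - (X + 1) + C = Y + (Z + 1) then
            (if A + B - (X + 1) ≤ Z then (1:ℂ) else 0) - (if A + B - (X + 1) ≤ Y then 1 else 0)
          else 0) = 0 := by
        split
        · split_ifs <;> first | omega | norm_num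
        · rfl
      rw [hz, mul_zero]
  have g3 : (if h : Y + 1 ≤ B + C ∧ B + C - (Y + 1) < n then
        ((if B ≤ B + C - (Y + 1) then (1:ℂ) else 0) - (if B ≤ Y then 1 else 0)) *
        (if A + (B + C - (Y + 1)) = X + (Z + 1) then
            (if A ≤ Z then (1:ℂ) else 0) - (if A ≤ X then 1 else 0)
          else 0)
      else 0)
      = ((if B ≤ B + C - (Y + 1) then (1:ℂ) else 0) - (if B ≤ Y then 1 else 0)) *
        (if A + (B + C - (Y + 1)) = X + (Z + 1) then
            (if A ≤ Z then (1:ℂ) else 0) - (if A ≤ X then 1 else 0)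
          else 0) := by
    split
    · rfl
    · rename_i h
      split_ifs <;> first | omega | norm_num
  rw [g1, g2, g3]
  by_cases d1 : A + C - (Z + 1) + B = X + (Y + 1) <;>
    by_cases d2 : A + B - (X + 1) + C = Y + (Z + 1) <;>
      by_cases d3 : A + (B + C - (Y + 1)) = X + (Z + 1) <;>
        (first | rw [if_pos d1] | rw [if_neg d1]) <;>
        (first | rw [if_pos d2] | rw [if_neg d2]) <;>
        (first | rw [if_pos d3] | rw [if_neg d3]) <;>
        (try simp only [mul_zero]) <;>
        first
        | (split_ifs <;> first | omega | norm_num)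
        | norm_num

theorem bCG_acYB (n : ℕ) (hn : 2 ≤ n) :
    op13 n (bCG n) * op12 n (bCG n) - op12 n (bCG n) * op23 n (bCG n)
      + op23 n (bCG n) * op13 n (bCG n) = 0 := by
  ext ⟨a, b, c⟩ ⟨x, y, z⟩
  simp only [Matrix.add_apply, Matrix.sub_apply, Matrix.mul_apply, Matrix.zero_apply,
    op12, op23, op13, Fintype.sum_prod_type, mul_ite, mul_one, mul_zero, ite_mul, one_mul,
    zero_mul, Finset.sum_ite_eq, Finset.sum_ite_eq', Finset.mem_univ, if_true,
    Finset.sum_ite_irrel, Finset.sum_const_zero]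
  simp only [bCG_apply, ite_mul, zero_mul, sum_delta, sum_delta', Fin.val_mk]
  exact core n a b c x y z a.2 b.2 c.2 x.2 y.2 z.2
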